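/- The operator D_+ = Σ_{k=1}^n x_k² ∂_k applied to the Vandermonde determinant a_δ = Π_{i<j}(x_i - x_j) gives D_+(a_δ) = (n-1)(x_1 + x_2 + ... + x_n)·a_δ. -/

import Mathlib

open MvPolynomial Finset

lemma pderiv_finset_prod {σ : Type*} {ι : Type*} [DecidableEq ι] (k : σ) (S : Finset ι)
    (f : ι → MvPolynomial σ ℚ) :
    pderiv k (∏ p ∈ S, f p) = ∑ p ∈ S, pderiv k (f p) * ∏ q ∈ S.erase p, f q := by
  classical
  induction S using Finset.induction_on with
  | empty => simp
  | @insert a S ha ih =>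
    rw [Finset.prod_insert ha, pderiv_mul, ih, Finset.mul_sum, Finset.sum_insert ha,
      Finset.erase_insert ha]
    congr 1
    apply Finset.sum_congr rfl
    intro p hp
    rw [Finset.erase_insert_of_ne (by rintro rfl; exact ha hp),
      Finset.prod_insert (fun h => ha (Finset.mem_of_mem_erase h))]
    ring

/-- `D₊ = Σ xₖ² ∂ₖ`. -/
noncomputable def Dplus (n : ℕ) (p : MvPolynomial (Fin n) ℚ) : MvPolynomial (Fin n) ℚ :=
  ∑ k : Fin n, X k ^ 2 * pderiv k p

/-- The Vandermonde determinant `a_δ = Π_{i<j} (xᵢ - xⱼ)`. -/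
noncomputable def vandermondePoly (n : ℕ) : MvPolynomial (Fin n) ℚ :=
  ∏ p ∈ Finset.univ.filter (fun p : Fin n × Fin n => p.1 < p.2), (X p.1 - X p.2)


lemma sum_pairs_eq (n : ℕ) :
    ∑ p ∈ Finset.univ.filter (fun p : Fin n × Fin n => p.1 < p.2),
        ((X p.1 + X p.2) : MvPolynomial (Fin n) ℚ)
      = ((n : ℚ) - 1) • ∑ k : Fin n, X k := by
  classical
  rw [Finset.sum_filter, Fintype.sum_prod_type]
  have split : ∀ i j : Fin n, (if i < j then (X i + X j : MvPolynomial (Fin n) ℚ) else 0)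
      = (if i < j then X i else 0) + (if i < j then X j else 0) := by
    intro i j; split <;> simp
  simp_rw [split, Finset.sum_add_distrib]
  have A : ∀ i : Fin n, ∑ j : Fin n, (if i < j then (X i : MvPolynomial (Fin n) ℚ) else 0)
      = (n - 1 - (i : ℕ)) • X i := by
    intro i
    rw [← Finset.sum_filter, Finset.sum_const]
    congr 1
    rw [Finset.filter_lt_eq_Ioi, Fin.card_Ioi]
  have B : ∀ j : Fin n, ∑ i : Fin n, (if i < j then (X j : MvPolynomial (Fin n) ℚ) else 0)
      = (j : ℕ) • X j := by
    intro j
    rw [← Finset.sum_filter, Finset.sum_const]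
    congr 1
    rw [Finset.filter_gt_eq_Iio, Fin.card_Iio]
  rw [Finset.sum_comm (f := fun i j => if i < j then (X j : MvPolynomial (Fin n) ℚ) else 0)]
  simp_rw [A, B]
  rw [← Finset.sum_add_distrib, Finset.smul_sum]
  apply Finset.sum_congr rfl
  intro k _
  rw [← add_nsmul, Nat.sub_add_cancel (by omega : (k : ℕ) ≤ n - 1)]
  have hn : 1 ≤ n := k.pos
  rw [← Nat.cast_smul_eq_nsmul ℚ, Nat.cast_sub hn, Nat.cast_one]

/-- `D₊(a_δ) = (n-1)(x₁+⋯+xₙ)·a_δ`. -/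
theorem Dplus_vandermonde (n : ℕ) :
    Dplus n (vandermondePoly n) =
      ((n : ℚ) - 1) • ((∑ k : Fin n, X k) * vandermondePoly n) := by
  classical
  set S := Finset.univ.filter (fun p : Fin n × Fin n => p.1 < p.2) with hS
  have key : Dplus n (vandermondePoly n)
      = (∑ p ∈ S, ((X p.1 + X p.2) : MvPolynomial (Fin n) ℚ)) * vandermondePoly n := by
    unfold Dplus vandermondePoly
    simp_rw [pderiv_finset_prod, Finset.mul_sum]
    rw [Finset.sum_comm]
    rw [Finset.sum_mul]
    apply Finset.sum_congr rfl
    intro p hp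
    have hlt : p.1 < p.2 := (Finset.mem_filter.mp hp).2
    have hsum : ∑ k : Fin n, (X k ^ 2 * pderiv k ((X p.1 - X p.2) : MvPolynomial (Fin n) ℚ))
        = X p.1 ^ 2 - X p.2 ^ 2 := by
      simp_rw [map_sub, mul_sub, Finset.sum_sub_distrib]
      congr 1
      · rw [Finset.sum_eq_single p.1]
        · simp
        · intro k _ hk; rw [pderiv_X_of_ne (Ne.symm hk)]; ring
        · simp
      · rw [Finset.sum_eq_single p.2]
        · simp
        · intro k _ hk; rw [pderiv_X_of_ne (Ne.symm hk)]; ring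
        · simp
    calc ∑ k : Fin n, X k ^ 2 * (pderiv k ((X p.1 - X p.2) : MvPolynomial (Fin n) ℚ) *
            ∏ q ∈ S.erase p, (X q.1 - X q.2))
        = (∑ k : Fin n, X k ^ 2 * pderiv k ((X p.1 - X p.2) : MvPolynomial (Fin n) ℚ)) *
            ∏ q ∈ S.erase p, (X q.1 - X q.2) := by
          rw [Finset.sum_mul]; simp_rw [mul_assoc]
      _ = (X p.1 + X p.2) * ((X p.1 - X p.2) * ∏ q ∈ S.erase p, (X q.1 - X q.2)) := by
          rw [hsum]; ring
      _ = (X p.1 + X p.2) * ∏ q ∈ S, (X q.1 - X q.2) := by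
          exact congrArg _ (Finset.mul_prod_erase S (fun q => X q.1 - X q.2) hp)
  rw [key, sum_pairs_eq, smul_mul_assoc]
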